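/- Let α ∈ (0,1), 1 ≤ p < 1/α, and let W(x,y) = g(x)·g(y) on [0,1]² with g(x) = (1−α)(1−x)^{−α}. Then tail_ρ^{(p)}(W) = ‖W − min{W,1/ρ}‖_p = O(ρ^{(1−pα)/(pα)}·|log ρ|^{1/p}) as ρ → 0⁺. -/

import Mathlib

open MeasureTheory Set
open intervalIntegral


-- pointwise: min 1 z ^ q ≤ z ^ γ  for 0 ≤ z, 0 < γ ≤ q
lemma minpow_le (z q γ : ℝ) (hz : 0 ≤ z) (hγ : 0 < γ) (hγq : γ ≤ q) :
    min 1 z ^ q ≤ z ^ γ := by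
  rcases le_or_gt 1 z with h | h
  · rw [min_eq_left h, Real.one_rpow]
    exact Real.one_le_rpow h hγ.le
  · rw [min_eq_right h.le]
    rcases eq_or_lt_of_le hz with h0 | h0
    · rw [← h0, Real.zero_rpow (lt_of_lt_of_le hγ hγq).ne', Real.zero_rpow hγ.ne']
    · exact Real.rpow_le_rpow_of_exponent_ge h0 h.le hγq

-- ∫_0^1 u^{-s} (min 1 (t/u))^{1-s} ≤ t^γ/(1-s-γ)
lemma outer_int (s t γ : ℝ) (hs0 : 0 < s) (hs1 : s < 1) (hγ0 : 0 < γ)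
    (hγ : γ < 1 - s) (ht : 0 ≤ t) :
    ∫ u in (0:ℝ)..1, u ^ (-s) * min 1 (t/u) ^ (1-s) ≤ t ^ γ / (1-s-γ) := by
  have key : ∀ u ∈ Icc (0:ℝ) 1, u ^ (-s) * min 1 (t/u) ^ (1-s) ≤ t ^ γ * u ^ (-(s+γ)) := by
    intro u hu
    rcases eq_or_lt_of_le hu.1 with h0 | h0
    · have e1 : (0:ℝ) ^ (-s) = 0 := Real.zero_rpow (by simp [hs0.ne'])
      have e2 : (0:ℝ) ^ (-(s+γ)) = 0 := Real.zero_rpow (by intro h; nlinarith)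
      rw [← h0, e1, e2]
      simp
    · have h1 : min 1 (t/u) ^ (1-s) ≤ (t/u) ^ γ :=
        minpow_le _ _ _ (by positivity) hγ0 hγ.le
      calc u ^ (-s) * min 1 (t/u) ^ (1-s) ≤ u ^ (-s) * (t/u) ^ γ := by
            gcongr
        _ = t ^ γ * u ^ (-(s+γ)) := by
            rw [Real.div_rpow ht h0.le, Real.rpow_neg h0.le (s+γ),
              Real.rpow_add h0, Real.rpow_neg h0.le s, mul_inv]
            ring
  have hint2 : IntervalIntegrable (fun u : ℝ => t ^ γ * u ^ (-(s+γ))) volume 0 1 :=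
    (intervalIntegrable_rpow' (by linarith)).const_mul _
  have hint1 : IntervalIntegrable (fun u : ℝ => u ^ (-s) * min 1 (t/u) ^ (1-s)) volume 0 1 := by
    apply hint2.mono_fun
    · apply Measurable.aestronglyMeasurable; fun_prop
    · filter_upwards [ae_restrict_mem measurableSet_uIoc] with u hu
      rw [uIoc_of_le (by norm_num)] at hu
      have h0 : (0:ℝ) < u := hu.1
      simp only [Real.norm_eq_abs]
      rw [abs_of_nonneg (by positivity), abs_of_nonneg (by positivity)]
      exact key u ⟨h0.le, hu.2⟩
  calc ∫ u in (0:ℝ)..1, u ^ (-s) * min 1 (t/u) ^ (1-s)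
      ≤ ∫ u in (0:ℝ)..1, t ^ γ * u ^ (-(s+γ)) :=
        integral_mono_on (by norm_num) hint1 hint2 key
    _ = t ^ γ * ((1:ℝ) ^ (-(s+γ)+1) - (0:ℝ) ^ (-(s+γ)+1)) / (-(s+γ)+1) := by
        rw [intervalIntegral.integral_const_mul, integral_rpow (Or.inl (by linarith))]
        ring
    _ ≤ t ^ γ / (1-s-γ) := by
        rw [Real.one_rpow, Real.zero_rpow (by linarith)]
        apply le_of_eq
        ring_nf

lemma inner_intble (s r : ℝ) (hs1 : s < 1) (hr : 0 ≤ r) :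
    IntervalIntegrable (fun v : ℝ => v ^ (-s) * min 1 (r/v)) volume 0 1 := by
  apply (intervalIntegrable_rpow' (show (-1:ℝ) < -s by linarith)).mono_fun
  · apply Measurable.aestronglyMeasurable; fun_prop
  · filter_upwards [ae_restrict_mem measurableSet_uIoc] with v hv
    rw [uIoc_of_le (by norm_num)] at hv
    have h0 : (0:ℝ) < v := hv.1
    simp only [Real.norm_eq_abs]
    rw [abs_of_nonneg (mul_nonneg (Real.rpow_nonneg h0.le _)
      (le_min zero_le_one (div_nonneg hr h0.le))),
      abs_of_nonneg (Real.rpow_nonneg h0.le _)]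
    calc v ^ (-s) * min 1 (r/v) ≤ v ^ (-s) * 1 := by
          gcongr
          exact min_le_left _ _
      _ = v ^ (-s) := mul_one _

lemma inner_int (s r : ℝ) (hs0 : 0 < s) (hs1 : s < 1) (hr : 0 ≤ r) :
    ∫ v in (0:ℝ)..1, v ^ (-s) * min 1 (r/v) ≤ (1/(1-s) + 1/s) * min 1 r ^ (1-s) := by
  have hC : (0:ℝ) < 1/(1-s) + 1/s := by
    have h1s : (0:ℝ) < 1 - s := by linarith
    positivity
  have hrpow : ∫ v in (0:ℝ)..1, v ^ (-s) = 1/(1-s) := by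
    rw [integral_rpow (Or.inl (by linarith)), Real.one_rpow,
      Real.zero_rpow (by intro h; nlinarith)]
    ring_nf
  rcases le_or_gt 1 r with hr1 | hr1
  · rw [min_eq_left hr1, Real.one_rpow, mul_one]
    calc ∫ v in (0:ℝ)..1, v ^ (-s) * min 1 (r/v)
        ≤ ∫ v in (0:ℝ)..1, v ^ (-s) := by
          apply integral_mono_on (by norm_num) (inner_intble s r hs1 hr)
            (intervalIntegrable_rpow' (by linarith))
          intro v hv
          calc v ^ (-s) * min 1 (r/v) ≤ v ^ (-s) * 1 := by
                gcongr
                · exact Real.rpow_nonneg hv.1 _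
                · exact min_le_left _ _
            _ = v ^ (-s) := mul_one _
      _ = 1/(1-s) := hrpow
      _ ≤ 1/(1-s) + 1/s := le_add_of_nonneg_right (by positivity)
  rcases eq_or_lt_of_le hr with h0 | h0
  · have : ∀ v : ℝ, v ^ (-s) * min 1 (r/v) = 0 := by
      intro v; rw [← h0]; simp
    simp only [this, intervalIntegral.integral_zero]
    rw [← h0]
    rw [min_eq_right (by norm_num : (0:ℝ) ≤ 1)]
    rw [Real.zero_rpow (show (1:ℝ)-s ≠ 0 from ne_of_gt (by linarith))]
    simp
  · -- 0 < r < 1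
    rw [min_eq_right hr1.le]
    have hint01 := inner_intble s r hs1 hr
    have hint0r : IntervalIntegrable (fun v : ℝ => v ^ (-s) * min 1 (r/v)) volume 0 r :=
      hint01.mono_set (by rw [uIcc_of_le hr, uIcc_of_le (by norm_num)]; exact Icc_subset_Icc le_rfl hr1.le)
    have hintr1 : IntervalIntegrable (fun v : ℝ => v ^ (-s) * min 1 (r/v)) volume r 1 :=
      hint01.mono_set (by rw [uIcc_of_le hr1.le, uIcc_of_le (by norm_num)]; exact Icc_subset_Icc hr le_rfl)
    have hsplit : (∫ v in (0:ℝ)..r, v ^ (-s) * min 1 (r/v)) + ∫ v in r..1, v ^ (-s) * min 1 (r/v)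
        = ∫ v in (0:ℝ)..1, v ^ (-s) * min 1 (r/v) :=
      intervalIntegral.integral_add_adjacent_intervals hint0r hintr1
    have hb1 : (∫ v in (0:ℝ)..r, v ^ (-s) * min 1 (r/v)) ≤ r ^ (1-s) / (1-s) := by
      calc (∫ v in (0:ℝ)..r, v ^ (-s) * min 1 (r/v))
          ≤ ∫ v in (0:ℝ)..r, v ^ (-s) := by
            apply integral_mono_on hr hint0r
              (intervalIntegrable_rpow' (by linarith))
            intro v hv
            calc v ^ (-s) * min 1 (r/v) ≤ v ^ (-s) * 1 := by
                  gcongr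
                  · exact Real.rpow_nonneg hv.1 _
                  · exact min_le_left _ _
              _ = v ^ (-s) := mul_one _
        _ = r ^ (1-s) / (1-s) := by
            rw [integral_rpow (Or.inl (by linarith)),
              Real.zero_rpow (by intro h; nlinarith)]
            ring_nf
    have hb2 : (∫ v in r..1, v ^ (-s) * min 1 (r/v)) ≤ r ^ (1-s) / s := by
      have hint2 : IntervalIntegrable (fun v : ℝ => r * v ^ (-1-s)) volume r 1 := by
        apply IntervalIntegrable.const_mul
        apply intervalIntegrable_rpow (Or.inr ?_)
        rw [uIcc_of_le hr1.le]
        intro hmem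
        exact absurd hmem.1 (not_le.mpr h0)
      calc (∫ v in r..1, v ^ (-s) * min 1 (r/v))
          ≤ ∫ v in r..1, r * v ^ (-1-s) := by
            apply integral_mono_on hr1.le hintr1 hint2
            intro v hv
            have hv0 : 0 < v := lt_of_lt_of_le h0 hv.1
            calc v ^ (-s) * min 1 (r/v) ≤ v ^ (-s) * (r/v) :=
                  mul_le_mul_of_nonneg_left (min_le_right _ _) (Real.rpow_nonneg hv0.le _)
              _ = r * v ^ (-1-s) := by
                  rw [show (-1-s : ℝ) = -s + (-1) by ring, Real.rpow_add hv0,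
                    Real.rpow_neg_one]
                  field_simp
        _ = r * (((1:ℝ) ^ (-1-s+1) - r ^ (-1-s+1)) / (-1-s+1)) := by
            rw [intervalIntegral.integral_const_mul,
              integral_rpow (Or.inr ⟨by intro h; nlinarith, by
                rw [uIcc_of_le hr1.le]; intro hmem; exact absurd hmem.1 (not_le.mpr h0)⟩)]
        _ ≤ r ^ (1-s) / s := by
            rw [Real.one_rpow, show (-1-s+1 : ℝ) = -s by ring]
            have h1 : r * r ^ (-s) = r ^ (1-s) := by
              rw [show (1-s:ℝ) = 1 + (-s) by ring, Real.rpow_add h0, Real.rpow_one]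
            have h2 : (1 - r ^ (-s)) / -s = (r ^ (-s) - 1)/s := by
              rw [div_neg, ← neg_div, neg_sub]
            rw [h2, ← mul_div_assoc, div_le_div_iff₀ hs0 hs0]
            nlinarith [h1, mul_nonneg h0.le hs0.le, Real.rpow_nonneg hr (1-s)]
    calc ∫ v in (0:ℝ)..1, v ^ (-s) * min 1 (r/v)
        = (∫ v in (0:ℝ)..r, v ^ (-s) * min 1 (r/v)) + ∫ v in r..1, v ^ (-s) * min 1 (r/v) := hsplit.symm
      _ ≤ r ^ (1-s) / (1-s) + r ^ (1-s) / s := add_le_add hb1 hb2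
      _ = (1/(1-s) + 1/s) * r ^ (1-s) := by ring

lemma icc_eq (f : ℝ → ℝ) : ∫ y in Icc (0:ℝ) 1, f (1-y) = ∫ v in (0:ℝ)..1, f v := by
  rw [integral_Icc_eq_integral_Ioc,
    ← intervalIntegral.integral_of_le (by norm_num : (0:ℝ) ≤ 1)]
  simpa using intervalIntegral.integral_comp_sub_left f 1

lemma icc_intble (f : ℝ → ℝ) (hf : IntervalIntegrable f volume 0 1) :
    IntegrableOn (fun y => f (1-y)) (Icc (0:ℝ) 1) := by
  have := hf.comp_sub_left 1
  simp only [sub_zero, sub_self] at this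
  exact (intervalIntegrable_iff_integrableOn_Icc_of_le (by norm_num)).mp this.symm

lemma pointwise_bound (α p ρ x y : ℝ) (hα0 : 0 < α) (hα1 : α < 1) (hp : 1 ≤ p) (hρ : 0 < ρ)
    (hx : x ∈ Icc (0:ℝ) 1) (hy : y ∈ Icc (0:ℝ) 1) :
    |((1 - α) * (1 - x) ^ (-α)) * ((1 - α) * (1 - y) ^ (-α)) -
      min (((1 - α) * (1 - x) ^ (-α)) * ((1 - α) * (1 - y) ^ (-α))) (1/ρ)| ^ p ≤
    (((1-α)^2) ^ p * (1-x) ^ (-(p*α))) *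
      ((1-y) ^ (-(p*α)) * min 1 (((((1-α)^2*ρ) ^ (α⁻¹)) / (1-x)) / (1-y))) := by
  have hu : 0 ≤ 1 - x := by linarith [hx.2]
  have hv : 0 ≤ 1 - y := by linarith [hy.2]
  set u := 1 - x with hu_def
  set v := 1 - y with hv_def
  set t := ((1-α)^2*ρ) ^ (α⁻¹) with ht_def
  have hc : (0:ℝ) < 1 - α := by linarith
  have ht0 : 0 ≤ t := Real.rpow_nonneg (by positivity) _
  set W := ((1 - α) * u ^ (-α)) * ((1 - α) * v ^ (-α)) with hW_def
  have hW0 : 0 ≤ W :=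
    mul_nonneg (mul_nonneg hc.le (Real.rpow_nonneg hu _))
      (mul_nonneg hc.le (Real.rpow_nonneg hv _))
  have hWe : W = (1-α)^2 * (u*v) ^ (-α) := by
    rw [hW_def, Real.mul_rpow hu hv]; ring
  have hp0 : (0:ℝ) < p := lt_of_lt_of_le one_pos hp
  have hmin0 : 0 ≤ min 1 ((t/u)/v) :=
    le_min zero_le_one (div_nonneg (div_nonneg ht0 hu) hv)
  rcases le_or_gt W (1/ρ) with hcase | hcase
  · rw [min_eq_left hcase, sub_self, abs_zero, Real.zero_rpow hp0.ne']
    apply mul_nonneg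
    · exact mul_nonneg (Real.rpow_nonneg (by positivity) _) (Real.rpow_nonneg hu _)
    · exact mul_nonneg (Real.rpow_nonneg hv _) hmin0
  · rw [min_eq_right hcase.le]
    have h1ρ : 0 < 1/ρ := by positivity
    have huv0 : u * v ≠ 0 := by
      intro h
      rw [hWe, h, Real.zero_rpow (neg_ne_zero.mpr hα0.ne'), mul_zero] at hcase
      linarith
    have huv : 0 < u * v := lt_of_le_of_ne (mul_nonneg hu hv) (Ne.symm huv0)
    have hA : 0 < (u*v) ^ α := Real.rpow_pos_of_pos huv α
    have hlt : (u*v) ^ α < (1-α)^2 * ρ := by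
      have hWe' : W = (1-α)^2 / (u*v) ^ α := by
        rw [hWe, Real.rpow_neg (mul_nonneg hu hv), div_eq_mul_inv]
      rw [hWe'] at hcase
      have := (div_lt_div_iff₀ hρ hA).mp hcase
      linarith
    have htuv : u * v ≤ t := by
      have : ((u*v) ^ α) ^ (α⁻¹) < ((1-α)^2*ρ) ^ (α⁻¹) :=
        Real.rpow_lt_rpow hA.le hlt (inv_pos.mpr hα0)
      rw [Real.rpow_rpow_inv (mul_nonneg hu hv) hα0.ne'] at this
      exact this.le
    have hmin : min 1 ((t/u)/v) = 1 := by
      rw [div_div]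
      exact min_eq_left ((one_le_div huv).mpr htuv)
    have h2 : |W - 1/ρ| ^ p ≤ W ^ p := by
      rw [abs_of_nonneg (by linarith)]
      exact Real.rpow_le_rpow (by linarith) (by linarith) hp0.le
    calc |W - 1/ρ| ^ p ≤ W ^ p := h2
      _ = (((1-α)^2) ^ p * u ^ (-(p*α))) * (v ^ (-(p*α)) * min 1 ((t/u)/v)) := by
        rw [hmin, mul_one, hWe,
          Real.mul_rpow (by positivity) (Real.rpow_nonneg (mul_nonneg hu hv) _),
          ← Real.rpow_mul (mul_nonneg hu hv),
          show (-α)*p = -(p*α) by ring, Real.mul_rpow hu hv]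
        ring
      _ = _ := rfl

lemma outer_intble (s t : ℝ) (hs1 : s < 1) (ht : 0 ≤ t) :
    IntervalIntegrable (fun u : ℝ => u ^ (-s) * min 1 (t/u) ^ (1-s)) volume 0 1 := by
  apply (intervalIntegrable_rpow' (show (-1:ℝ) < -s by linarith)).mono_fun
  · apply Measurable.aestronglyMeasurable; fun_prop
  · filter_upwards [ae_restrict_mem measurableSet_uIoc] with u hu
    rw [uIoc_of_le (by norm_num)] at hu
    have h0 : (0:ℝ) < u := hu.1
    have hm0 : 0 ≤ min 1 (t/u) := le_min zero_le_one (div_nonneg ht h0.le)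
    simp only [Real.norm_eq_abs]
    rw [abs_of_nonneg (mul_nonneg (Real.rpow_nonneg h0.le _) (Real.rpow_nonneg hm0 _)),
      abs_of_nonneg (Real.rpow_nonneg h0.le _)]
    calc u ^ (-s) * min 1 (t/u) ^ (1-s) ≤ u ^ (-s) * 1 :=
        mul_le_mul_of_nonneg_left
          (Real.rpow_le_one hm0 (min_le_left _ _) (by linarith))
          (Real.rpow_nonneg h0.le _)
      _ = u ^ (-s) := mul_one _

lemma main_integral_bound (α p ρ δ : ℝ) (hα0 : 0 < α) (hα1 : α < 1) (hp : 1 ≤ p)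
    (hs1 : p * α < 1) (hρ : 0 < ρ) (hδ0 : 0 < δ) (hδs : δ < 1 - p*α) :
    (∫ x in Icc (0:ℝ) 1, ∫ y in Icc (0:ℝ) 1,
        |((1 - α) * (1 - x) ^ (-α)) * ((1 - α) * (1 - y) ^ (-α)) -
          min (((1 - α) * (1 - x) ^ (-α)) * ((1 - α) * (1 - y) ^ (-α))) (1/ρ)| ^ p) ≤
      ((1-α)^2) ^ p * (1/(1-p*α) + 1/(p*α)) *
        ((((1-α)^2*ρ) ^ (α⁻¹)) ^ (1-p*α-δ) / δ) := by
  have hp0 : (0:ℝ) < p := lt_of_lt_of_le one_pos hp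
  have hs0 : 0 < p * α := mul_pos hp0 hα0
  have hc : (0:ℝ) < 1 - α := by linarith
  have hC₁ : (0:ℝ) < 1/(1-p*α) + 1/(p*α) := by
    have h1s : (0:ℝ) < 1 - p*α := by linarith
    positivity
  set t := ((1-α)^2*ρ) ^ (α⁻¹) with htdef
  have ht0 : 0 ≤ t := Real.rpow_nonneg (by positivity) _
  -- step 1 : inner integral bound
  have step1 : ∀ x ∈ Icc (0:ℝ) 1,
      (∫ y in Icc (0:ℝ) 1,
        |((1 - α) * (1 - x) ^ (-α)) * ((1 - α) * (1 - y) ^ (-α)) -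
          min (((1 - α) * (1 - x) ^ (-α)) * ((1 - α) * (1 - y) ^ (-α))) (1/ρ)| ^ p) ≤
      (((1-α)^2) ^ p * (1/(1-p*α) + 1/(p*α))) *
        ((1-x) ^ (-(p*α)) * min 1 (t/(1-x)) ^ (1-p*α)) := by
    intro x hx
    have hu : 0 ≤ 1 - x := by linarith [hx.2]
    have hr : 0 ≤ t/(1-x) := div_nonneg ht0 hu
    have hGint : IntegrableOn
        (fun y => (((1-α)^2) ^ p * (1-x) ^ (-(p*α))) *
          ((1-y) ^ (-(p*α)) * min 1 ((t/(1-x))/(1-y)))) (Icc (0:ℝ) 1) volume := by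
      exact (icc_intble (fun v => v ^ (-(p*α)) * min 1 ((t/(1-x))/v))
        (inner_intble (p*α) (t/(1-x)) hs1 hr)).const_mul _
    calc (∫ y in Icc (0:ℝ) 1,
        |((1 - α) * (1 - x) ^ (-α)) * ((1 - α) * (1 - y) ^ (-α)) -
          min (((1 - α) * (1 - x) ^ (-α)) * ((1 - α) * (1 - y) ^ (-α))) (1/ρ)| ^ p)
        ≤ ∫ y in Icc (0:ℝ) 1, (((1-α)^2) ^ p * (1-x) ^ (-(p*α))) *
            ((1-y) ^ (-(p*α)) * min 1 ((t/(1-x))/(1-y))) := by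
          apply integral_mono_of_nonneg
            (Filter.Eventually.of_forall fun y => by positivity) hGint
          exact ae_restrict_of_forall_mem measurableSet_Icc
            (fun y hy => pointwise_bound α p ρ x y hα0 hα1 hp hρ hx hy)
      _ = (((1-α)^2) ^ p * (1-x) ^ (-(p*α))) *
            ∫ y in Icc (0:ℝ) 1, (1-y) ^ (-(p*α)) * min 1 ((t/(1-x))/(1-y)) :=
          integral_const_mul _ _
      _ = (((1-α)^2) ^ p * (1-x) ^ (-(p*α))) *
            ∫ v in (0:ℝ)..1, v ^ (-(p*α)) * min 1 ((t/(1-x))/v) := by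
          rw [icc_eq (fun v => v ^ (-(p*α)) * min 1 ((t/(1-x))/v))]
      _ ≤ (((1-α)^2) ^ p * (1-x) ^ (-(p*α))) *
            ((1/(1-p*α) + 1/(p*α)) * min 1 (t/(1-x)) ^ (1-p*α)) := by
          apply mul_le_mul_of_nonneg_left
            (inner_int (p*α) (t/(1-x)) hs0 hs1 hr)
          exact mul_nonneg (Real.rpow_nonneg (by positivity) _) (Real.rpow_nonneg hu _)
      _ = (((1-α)^2) ^ p * (1/(1-p*α) + 1/(p*α))) *
            ((1-x) ^ (-(p*α)) * min 1 (t/(1-x)) ^ (1-p*α)) := by ring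
  -- step 2 : integrability of the outer bound
  have step2 : IntegrableOn
      (fun x => (((1-α)^2) ^ p * (1/(1-p*α) + 1/(p*α))) *
        ((1-x) ^ (-(p*α)) * min 1 (t/(1-x)) ^ (1-p*α))) (Icc (0:ℝ) 1) volume :=
    (icc_intble (fun u => u ^ (-(p*α)) * min 1 (t/u) ^ (1-p*α))
      (outer_intble (p*α) t hs1 ht0)).const_mul _
  calc (∫ x in Icc (0:ℝ) 1, ∫ y in Icc (0:ℝ) 1,
        |((1 - α) * (1 - x) ^ (-α)) * ((1 - α) * (1 - y) ^ (-α)) -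
          min (((1 - α) * (1 - x) ^ (-α)) * ((1 - α) * (1 - y) ^ (-α))) (1/ρ)| ^ p)
      ≤ ∫ x in Icc (0:ℝ) 1, (((1-α)^2) ^ p * (1/(1-p*α) + 1/(p*α))) *
          ((1-x) ^ (-(p*α)) * min 1 (t/(1-x)) ^ (1-p*α)) := by
        apply integral_mono_of_nonneg
          (Filter.Eventually.of_forall fun x => integral_nonneg fun y => by positivity)
          step2
        exact ae_restrict_of_forall_mem measurableSet_Icc step1
    _ = (((1-α)^2) ^ p * (1/(1-p*α) + 1/(p*α))) *
          ∫ u in (0:ℝ)..1, u ^ (-(p*α)) * min 1 (t/u) ^ (1-p*α) := by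
        rw [MeasureTheory.integral_const_mul, icc_eq (fun u => u ^ (-(p*α)) * min 1 (t/u) ^ (1-p*α))]
    _ ≤ (((1-α)^2) ^ p * (1/(1-p*α) + 1/(p*α))) * (t ^ (1-p*α-δ) / δ) := by
        apply mul_le_mul_of_nonneg_left _ (mul_nonneg (Real.rpow_nonneg (by positivity) _) hC₁.le)
        have h := outer_int (p*α) t (1-p*α-δ) hs0 hs1 (by linarith) (by linarith) ht0
        rwa [show 1-p*α-(1-p*α-δ) = δ by ring] at h
    _ = ((1-α)^2) ^ p * (1/(1-p*α) + 1/(p*α)) * (t ^ (1-p*α-δ) / δ) := by ring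

/-- Tail bound for the power-law graphon `W(x,y) = g(x)g(y)` with
`g(x) = (1-α)(1-x)^{-α}`:
`tail_ρ^{(p)}(W) = O(ρ^{(1-pα)/(pα)} |log ρ|^{1/p})` as `ρ → 0⁺`. -/
theorem powerlaw_product_tail_bound
    (α p : ℝ) (hα0 : 0 < α) (hα1 : α < 1) (hp : 1 ≤ p) (hpα : p < 1/α) :
    ∃ C₀ ρ₀ : ℝ, 0 < C₀ ∧ 0 < ρ₀ ∧ ∀ ρ : ℝ, 0 < ρ → ρ ≤ ρ₀ →
      (∫ x in Icc (0:ℝ) 1, ∫ y in Icc (0:ℝ) 1,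
        |((1 - α) * (1 - x) ^ (-α)) * ((1 - α) * (1 - y) ^ (-α)) -
          min (((1 - α) * (1 - x) ^ (-α)) * ((1 - α) * (1 - y) ^ (-α))) (1/ρ)| ^ p)
        ^ (1/p) ≤
      C₀ * ρ ^ ((1 - p * α) / (p * α)) * |Real.log ρ| ^ (1/p) := by
  have hp0 : (0:ℝ) < p := lt_of_lt_of_le one_pos hp
  have hs1 : p * α < 1 := (lt_div_iff₀ hα0).mp hpα
  have hs0 : 0 < p * α := mul_pos hp0 hα0
  have hc : (0:ℝ) < 1 - α := by linarith
  have h1s : (0:ℝ) < 1 - p * α := by linarith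
  have hC₁ : (0:ℝ) < 1/(1-p*α) + 1/(p*α) := by positivity
  set K : ℝ := 2*α/(1-p*α) + 1 with hK
  have hK0 : 0 < K := by positivity
  have hc20 : (0:ℝ) < (1-α)^2 := by positivity
  have hc21 : (1-α)^2 ≤ 1 := by nlinarith
  refine ⟨(((1-α)^2)^p * (1/(1-p*α) + 1/(p*α)) * Real.exp 1) ^ (1/p) *
      ((1-α)^2) ^ ((1-p*α)/(p*α)) * (2/α) ^ (1/p),
    (1-α)^2 * Real.exp (-K), ?_, by positivity, ?_⟩
  · refine mul_pos (mul_pos ?_ ?_) ?_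
    · exact Real.rpow_pos_of_pos (by positivity) _
    · exact Real.rpow_pos_of_pos hc20 _
    · exact Real.rpow_pos_of_pos (by positivity) _
  intro ρ hρ hρ0
  have hexpK : Real.exp (-K) < 1 := by
    rw [← Real.exp_zero]
    exact Real.exp_lt_exp.mpr (by linarith)
  have hexpK0 : 0 < Real.exp (-K) := Real.exp_pos _
  have hρ1 : ρ < 1 := by nlinarith
  have hρc2 : ρ ≤ (1-α)^2 := by nlinarith
  have hc2ρ0 : 0 < (1-α)^2*ρ := by positivity
  have hc2ρ1 : (1-α)^2*ρ < 1 := by nlinarith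
  set t := ((1-α)^2*ρ)^(α⁻¹) with htdef
  have ht0 : 0 < t := Real.rpow_pos_of_pos hc2ρ0 _
  have hlogt : Real.log t = α⁻¹ * Real.log ((1-α)^2*ρ) := Real.log_rpow hc2ρ0 _
  set L := -Real.log t with hLdef
  have hlogc2ρ : Real.log ((1-α)^2*ρ) ≤ -K := by
    have h1 : (1-α)^2*ρ ≤ Real.exp (-K) := by nlinarith
    calc Real.log ((1-α)^2*ρ) ≤ Real.log (Real.exp (-K)) := Real.log_le_log hc2ρ0 h1
      _ = -K := Real.log_exp _
  have e2 : L = α⁻¹ * (-Real.log ((1-α)^2*ρ)) := by rw [hLdef, hlogt]; ring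
  have hL_low : 2/(1-p*α) + 1/α ≤ L := by
    have e1 : K ≤ -Real.log ((1-α)^2*ρ) := by linarith
    have e3 : α⁻¹ * K ≤ α⁻¹ * (-Real.log ((1-α)^2*ρ)) :=
      mul_le_mul_of_nonneg_left e1 (by positivity)
    have e4 : α⁻¹ * K = 2/(1-p*α) + 1/α := by rw [hK]; field_simp; try tauto
    rw [e2]
    linarith
  have hL0 : 0 < L := by
    have h1 : 0 < 2/(1-p*α) + 1/α := by positivity
    linarith
  have hLbig : 2/(1-p*α) < L := by
    have h1 : 0 < 1/α := by positivity
    linarith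
  set δ := 1/L with hδdef
  have hδ0 : 0 < δ := by positivity
  have hδs : δ < 1 - p*α := by
    have h2 : 0 < 2/(1-p*α) := by positivity
    have h3 : 1/L < 1/(2/(1-p*α)) := one_div_lt_one_div_of_lt h2 hLbig
    rw [one_div_div] at h3
    linarith
  have key := main_integral_bound α p ρ δ hα0 hα1 hp hs1 hρ hδ0 hδs
  have htδ : t ^ (1-p*α-δ) / δ = Real.exp 1 * (t ^ (1-p*α) * L) := by
    have h1 : t ^ (1-p*α-δ) = t ^ (1-p*α) * t ^ (-δ) := by
      rw [← Real.rpow_add ht0]; ring_nf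
    have h2 : t ^ (-δ) = Real.exp 1 := by
      rw [Real.rpow_def_of_pos ht0]
      congr 1
      have h3 : Real.log t = -L := by rw [hLdef]; ring
      rw [h3, hδdef]
      field_simp
    have h3 : 1/δ = L := by rw [hδdef, one_div_one_div]
    calc t ^ (1-p*α-δ)/δ = t^(1-p*α) * t^(-δ) * (1/δ) := by rw [h1]; ring
      _ = Real.exp 1 * (t^(1-p*α)*L) := by rw [h2, h3]; ring
  rw [htδ] at key
  have hInn : 0 ≤ ∫ x in Icc (0:ℝ) 1, ∫ y in Icc (0:ℝ) 1,
      |((1 - α) * (1 - x) ^ (-α)) * ((1 - α) * (1 - y) ^ (-α)) -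
        min (((1 - α) * (1 - x) ^ (-α)) * ((1 - α) * (1 - y) ^ (-α))) (1/ρ)| ^ p :=
    integral_nonneg fun x => integral_nonneg fun y => by positivity
  have hmono := Real.rpow_le_rpow hInn key (by positivity : (0:ℝ) ≤ 1/p)
  refine le_trans hmono ?_
  -- final arithmetic
  have hL_up : L ≤ (2/α) * |Real.log ρ| := by
    have hlρ : Real.log ρ < 0 := Real.log_neg hρ hρ1
    have habs : |Real.log ρ| = -Real.log ρ := abs_of_neg hlρ
    have hlogmul : Real.log ((1-α)^2*ρ) = Real.log ((1-α)^2) + Real.log ρ :=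
      Real.log_mul (by positivity) hρ.ne'
    have hlc2 : Real.log ρ ≤ Real.log ((1-α)^2) := Real.log_le_log hρ hρc2
    rw [e2, habs, hlogmul]
    calc α⁻¹ * (-(Real.log ((1-α)^2) + Real.log ρ)) ≤ α⁻¹ * (2*(-Real.log ρ)) := by
          apply mul_le_mul_of_nonneg_left _ (by positivity)
          linarith
      _ = 2/α * -Real.log ρ := by ring
  have hA0 : (0:ℝ) ≤ ((1-α)^2)^p * (1/(1-p*α) + 1/(p*α)) * Real.exp 1 := by positivity
  have hB0 : (0:ℝ) ≤ t^(1-p*α) := Real.rpow_nonneg ht0.le _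
  calc (((1-α)^2)^p * (1/(1-p*α) + 1/(p*α)) * (Real.exp 1 * (t^(1-p*α) * L))) ^ (1/p)
      = ((((1-α)^2)^p * (1/(1-p*α) + 1/(p*α)) * Real.exp 1) * (t^(1-p*α) * L)) ^ (1/p) := by
        ring_nf
    _ = (((1-α)^2)^p * (1/(1-p*α) + 1/(p*α)) * Real.exp 1) ^ (1/p) *
          ((t^(1-p*α))^(1/p) * L^(1/p)) := by
        rw [Real.mul_rpow hA0 (mul_nonneg hB0 hL0.le), Real.mul_rpow hB0 hL0.le]
    _ = (((1-α)^2)^p * (1/(1-p*α) + 1/(p*α)) * Real.exp 1) ^ (1/p) *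
          ((((1-α)^2) ^ ((1-p*α)/(p*α)) * ρ ^ ((1-p*α)/(p*α))) * L^(1/p)) := by
        congr 2
        rw [← Real.rpow_mul ht0.le, htdef, ← Real.rpow_mul hc2ρ0.le,
          show α⁻¹ * ((1-p*α) * (1/p)) = (1-p*α)/(p*α) by field_simp; try tauto,
          Real.mul_rpow hc20.le hρ.le]
    _ ≤ (((1-α)^2)^p * (1/(1-p*α) + 1/(p*α)) * Real.exp 1) ^ (1/p) *
          ((((1-α)^2) ^ ((1-p*α)/(p*α)) * ρ ^ ((1-p*α)/(p*α))) *
            ((2/α)^(1/p) * |Real.log ρ|^(1/p))) := by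
        apply mul_le_mul_of_nonneg_left _ (Real.rpow_nonneg hA0 _)
        apply mul_le_mul_of_nonneg_left _
          (mul_nonneg (Real.rpow_nonneg hc20.le _) (Real.rpow_nonneg hρ.le _))
        rw [← Real.mul_rpow (by positivity) (abs_nonneg _)]
        exact Real.rpow_le_rpow hL0.le hL_up (by positivity)
    _ = (((1-α)^2)^p * (1/(1-p*α) + 1/(p*α)) * Real.exp 1) ^ (1/p) *
          ((1-α)^2) ^ ((1-p*α)/(p*α)) * (2/α) ^ (1/p) * ρ ^ ((1-p*α)/(p*α)) *
          |Real.log ρ| ^ (1/p) := by ring
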